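/- For all x > 0 and y > 0 one has κ(1 + xy) + φ←(x) + x·φ←(y) > 0. (This is the statement that vacuum never forms in the Glimm resolution of any overtaking interaction of two backward waves in the isentropic p-system.) -/

import Mathlib

open Real Set Filter Topology

/-- κ = √γ / α with α = (γ-1)/2. -/
noncomputable def kappa (γ : ℝ) : ℝ := Real.sqrt γ / ((γ - 1) / 2)

/-- The shock branch x ↦ √((1 - x^{-1/α})(x^{γ/α} - 1)), α = (γ-1)/2. -/
noncomputable def shockPart (γ : ℝ) (x : ℝ) : ℝ :=
  Real.sqrt ((1 - x ^ (-(1 : ℝ) / ((γ - 1) / 2))) * (x ^ (γ / ((γ - 1) / 2)) - 1))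

/-- Backward auxiliary function φ← : rarefaction branch κ(x-1) for x ≤ 1,
    shock branch for x ≥ 1 (they agree, with value 0, at x = 1). -/
noncomputable def phiB (γ : ℝ) (x : ℝ) : ℝ :=
  if x ≤ 1 then kappa γ * (x - 1) else shockPart γ x

/-- Forward auxiliary function φ→ : shock branch -√(...) for x ≤ 1,
    rarefaction branch κ(x-1) for x ≥ 1 (they agree, with value 0, at x = 1). -/
noncomputable def phiF (γ : ℝ) (x : ℝ) : ℝ :=
  if x < 1 then -shockPart γ x else kappa γ * (x - 1)

/-- vacuum never forms in overtaking interactions of backward waves: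
    κ(1+xy) + φ←(x) + x·φ←(y) > 0 for all x, y > 0. -/
lemma sinh_mul_ge (c : ℝ) (hc : 1 ≤ c) : ∀ u : ℝ, 0 ≤ u → c * Real.sinh u ≤ Real.sinh (c * u) := by
  have hmono : MonotoneOn (fun s : ℝ => Real.sinh (c * s) - c * Real.sinh s) (Ici 0) := by
    apply monotoneOn_of_deriv_nonneg (convex_Ici 0)
    · exact ((Real.continuous_sinh.comp (continuous_const.mul continuous_id)).sub
        (continuous_const.mul Real.continuous_sinh)).continuousOn
    · intro s hs
      exact (((Real.differentiable_sinh.comp ((differentiable_const c).mul differentiable_id)) s).sub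
        (((differentiable_const c).mul Real.differentiable_sinh) s)).differentiableWithinAt
    · intro s hs
      rw [interior_Ici, mem_Ioi] at hs
      have h1 : HasDerivAt (fun s : ℝ => Real.sinh (c * s)) (Real.cosh (c * s) * c) s :=
        (Real.hasDerivAt_sinh (c * s)).comp s (by simpa using (hasDerivAt_id s).const_mul c)
      have h2 : HasDerivAt (fun s : ℝ => Real.sinh (c * s) - c * Real.sinh s)
          (Real.cosh (c * s) * c - c * Real.cosh s) s :=
        h1.sub ((Real.hasDerivAt_sinh s).const_mul c)
      rw [h2.deriv]
      have hle : Real.cosh s ≤ Real.cosh (c * s) := by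
        rw [Real.cosh_le_cosh]
        rw [abs_of_nonneg hs.le, abs_of_nonneg (by positivity)]
        nlinarith
      nlinarith [Real.cosh_pos s]
  intro u hu
  have := hmono (self_mem_Ici) (mem_Ici.2 hu) hu
  simp only [mul_zero, Real.sinh_zero] at this
  linarith


lemma cosh_key (c u : ℝ) (hc : 1 ≤ c) (hu : 0 ≤ u) :
    c ^ 2 * (Real.cosh u - 1) ≤ Real.cosh (c * u) - 1 := by
  have e1 : Real.cosh u - 1 = 2 * Real.sinh (u / 2) ^ 2 := by
    have h := Real.cosh_two_mul (u / 2)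
    rw [show (2 : ℝ) * (u / 2) = u by ring] at h
    nlinarith [Real.cosh_sq_sub_sinh_sq (u / 2)]
  have e2 : Real.cosh (c * u) - 1 = 2 * Real.sinh (c * (u / 2)) ^ 2 := by
    have h := Real.cosh_two_mul (c * (u / 2))
    rw [show (2 : ℝ) * (c * (u / 2)) = c * u by ring] at h
    nlinarith [Real.cosh_sq_sub_sinh_sq (c * (u / 2))]
  rw [e1, e2]
  have h1 := sinh_mul_ge c hc (u / 2) (by linarith)
  have h2 : 0 ≤ Real.sinh (u / 2) := Real.sinh_nonneg_iff.2 (by linarith)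
  have h3 : 0 ≤ c * Real.sinh (u / 2) := mul_nonneg (by linarith) h2
  nlinarith [mul_le_mul h1 h1 h3 (le_trans h3 h1)]

lemma exp_key (a t : ℝ) (ha : 0 < a) (ht : 0 ≤ t) :
    a * (a + 2) * (Real.exp t - 1) ^ 2 ≤
      (1 - Real.exp (-(a * t))) * (Real.exp ((a + 2) * t) - 1) := by
  have hc := cosh_key (a + 1) t (by linarith) ht
  rw [Real.cosh_eq, Real.cosh_eq] at hc
  set E := Real.exp t with hEdef
  set F := Real.exp ((a + 1) * t) with hFdef
  have hE' : Real.exp (-t) = E⁻¹ := Real.exp_neg t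
  have hF' : Real.exp (-((a + 1) * t)) = F⁻¹ := Real.exp_neg _
  rw [hE', hF'] at hc
  have hEpos : 0 < E := Real.exp_pos t
  have hFpos : 0 < F := Real.exp_pos _
  have hEE : E * E⁻¹ = 1 := mul_inv_cancel₀ hEpos.ne'
  have hFF : F * F⁻¹ = 1 := mul_inv_cancel₀ hFpos.ne'
  have h1 : Real.exp ((a + 2) * t) = F * E := by
    rw [hFdef, hEdef, ← Real.exp_add]; ring_nf
  have h2 : Real.exp (-(a * t)) = F⁻¹ * E := by
    rw [show -(a * t) = -((a + 1) * t) + t by ring, Real.exp_add, hF']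
  rw [h1, h2]
  have hc' : (a + 1) ^ 2 * (E * E + E * E⁻¹ - 2 * E) ≤ F * E + F⁻¹ * E - 2 * E := by
    nlinarith
  nlinarith

lemma kappa_pos (γ : ℝ) (hγ : 1 < γ) : 0 < kappa γ :=
  div_pos (Real.sqrt_pos.2 (by linarith)) (by linarith)

lemma shock_ge (γ : ℝ) (hγ : 1 < γ) {x : ℝ} (hx : 1 ≤ x) :
    kappa γ * (x - 1) ≤ shockPart γ x := by
  have hγ1 : 0 < γ - 1 := by linarith
  set a : ℝ := 2 / (γ - 1) with ha_def
  have ha : 0 < a := by positivity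
  have hx0 : 0 < x := lt_of_lt_of_le one_pos hx
  have ht : 0 ≤ Real.log x := Real.log_nonneg hx
  have hex : Real.exp (Real.log x) = x := Real.exp_log hx0
  have key := exp_key a (Real.log x) ha ht
  rw [hex] at key
  have e1 : Real.log x * (-(1 : ℝ) / ((γ - 1) / 2)) = -(a * Real.log x) := by
    rw [ha_def]; field_simp
  have e2 : Real.log x * (γ / ((γ - 1) / 2)) = (a + 2) * Real.log x := by
    rw [ha_def]; field_simp; ring
  unfold shockPart
  rw [Real.rpow_def_of_pos hx0, Real.rpow_def_of_pos hx0, e1, e2]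
  have hknn : 0 ≤ kappa γ * (x - 1) :=
    mul_nonneg (kappa_pos γ hγ).le (by linarith)
  rw [Real.le_sqrt hknn (le_trans (by positivity) key)]
  have hsq : Real.sqrt γ ^ 2 = γ := Real.sq_sqrt (by linarith)
  have heq : (kappa γ * (x - 1)) ^ 2 = a * (a + 2) * (x - 1) ^ 2 := by
    unfold kappa
    rw [ha_def, mul_pow, div_pow, hsq]
    field_simp
    ring
  linarith [heq ▸ key]

lemma phiB_ge (γ : ℝ) (hγ : 1 < γ) {x : ℝ} (hx : 0 < x) :
    kappa γ * (x - 1) ≤ phiB γ x := by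
  unfold phiB
  split_ifs with h
  · exact le_refl _
  · exact shock_ge γ hγ (le_of_lt (lt_of_not_ge h))

theorem no_vacuum_overtaking (γ : ℝ) (hγ : 1 < γ) :
    ∀ x y : ℝ, 0 < x → 0 < y →
      0 < kappa γ * (1 + x * y) + phiB γ x + x * phiB γ y := by
  intro x y hx hy
  have h1 := phiB_ge γ hγ hx
  have h2 := phiB_ge γ hγ hy
  have h3 : x * (kappa γ * (y - 1)) ≤ x * phiB γ y :=
    mul_le_mul_of_nonneg_left h2 hx.le
  have hk := kappa_pos γ hγ
  nlinarith [mul_pos (mul_pos hk hx) hy]
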